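/- Let δ ∈ (0, 1] and let Sparse be a compression operator on ℝ^N satisfying the δ-contraction property ‖x − Sparse(x)‖² ≤ (1 − δ)‖x‖² for all x. Define error memory recursively by m^(0) = 0 and m^(t+1) = m^(t) + u^(t) − Sparse(m^(t) + u^(t)), where the update vectors satisfy E[‖u^(t)‖²] ≤ U² for all t. Then for every t, E[‖m^(t+1)‖²] ≤ (4(1 − δ)/δ²) U². -/

import Mathlib

open MeasureTheory

/-- Error-feedback memory bound (Lemma 2): with a `δ`-contractive sparsifier and
updates of second moment at most `U²`, `E[‖m^(t+1)‖²] ≤ (4(1−δ)/δ²) U²`. -/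
theorem stmt_6 {N : ℕ} {Ω : Type*} [MeasurableSpace Ω]
    (μ : Measure Ω) [IsProbabilityMeasure μ]
    (δ : ℝ) (hδ0 : 0 < δ) (hδ1 : δ ≤ 1)
    (Sparse : EuclideanSpace ℝ (Fin N) → EuclideanSpace ℝ (Fin N))
    (hc : ∀ x, ‖x - Sparse x‖ ^ 2 ≤ (1 - δ) * ‖x‖ ^ 2)
    (m u : ℕ → Ω → EuclideanSpace ℝ (Fin N)) (U : ℝ)
    (h0 : ∀ ω, m 0 ω = 0)
    (hrec : ∀ t ω, m (t + 1) ω = m t ω + u t ω - Sparse (m t ω + u t ω))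
    (hint : ∀ t, Integrable (fun ω => ‖u t ω‖ ^ 2) μ)
    (hu : ∀ t, ∫ ω, ‖u t ω‖ ^ 2 ∂μ ≤ U ^ 2) :
    ∀ t, ∫ ω, ‖m (t + 1) ω‖ ^ 2 ∂μ ≤ (4 * (1 - δ) / δ ^ 2) * U ^ 2 := by
  have hU2 : 0 ≤ U ^ 2 :=
    le_trans (integral_nonneg fun ω => sq_nonneg _) (hu 0)
  set r : ℝ := 1 - δ / 2 with hr_def
  set c : ℝ := (1 - δ) * (2 - δ) / δ with hc_def
  have hr0 : 0 ≤ r := by simp only [hr_def]; linarith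
  have hr1 : r < 1 := by simp only [hr_def]; linarith
  have hc0 : 0 ≤ c := by
    apply div_nonneg _ hδ0.le
    nlinarith
  have hcδ : c * δ = (1 - δ) * (2 - δ) := by
    rw [hc_def]; exact div_mul_cancel₀ _ hδ0.ne'
  -- one-step pointwise inequality
  have hstep : ∀ t ω, ‖m (t + 1) ω‖ ^ 2 ≤ r * ‖m t ω‖ ^ 2 + c * ‖u t ω‖ ^ 2 := by
    intro t ω
    rw [hrec]
    set a := m t ω
    set b := u t ω
    have h1 := hc (a + b)
    have h2 : ‖a + b‖ ≤ ‖a‖ + ‖b‖ := norm_add_le _ _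
    have h3 : ‖a + b‖ ^ 2 ≤ (‖a‖ + ‖b‖) ^ 2 := by
      have := norm_nonneg (a + b)
      nlinarith [norm_nonneg a, norm_nonneg b]
    have h4 : ‖a + b - Sparse (a + b)‖ ^ 2 ≤ (1 - δ) * (‖a‖ + ‖b‖) ^ 2 := by
      nlinarith
    have key : δ * ((1 - δ) * (‖a‖ + ‖b‖) ^ 2) ≤
        δ * (r * ‖a‖ ^ 2) + (c * δ) * ‖b‖ ^ 2 := by
      rw [hcδ]
      simp only [hr_def]
      nlinarith [sq_nonneg (δ * ‖a‖ - 2 * (1 - δ) * ‖b‖), norm_nonneg a, norm_nonneg b,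
        mul_nonneg (norm_nonneg a) (norm_nonneg b)]
    have : (1 - δ) * (‖a‖ + ‖b‖) ^ 2 ≤ r * ‖a‖ ^ 2 + c * ‖b‖ ^ 2 := by
      have := key
      nlinarith
    linarith
  -- dominating sum
  set G : ℕ → Ω → ℝ := fun t ω => ∑ s ∈ Finset.range (t + 1), r ^ (t - s) * (c * ‖u s ω‖ ^ 2)
    with hG_def
  have hpt : ∀ t ω, ‖m (t + 1) ω‖ ^ 2 ≤ G t ω := by
    intro t
    induction t with
    | zero =>
      intro ω
      have := hstep 0 ω
      simp [hG_def, h0 ω] at this ⊢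
      simpa [h0 ω] using this
    | succ t ih =>
      intro ω
      have h1 := hstep (t + 1) ω
      have h2 : r * ‖m (t + 1) ω‖ ^ 2 ≤ r * G t ω :=
        mul_le_mul_of_nonneg_left (ih ω) hr0
      have h3 : r * G t ω + c * ‖u (t + 1) ω‖ ^ 2 = G (t + 1) ω := by
        simp only [hG_def]
        rw [Finset.sum_range_succ (n := t + 1)]
        rw [Finset.mul_sum]
        congr 1
        · apply Finset.sum_congr rfl
          intro s hs
          have hs' : s ≤ t := Nat.lt_succ_iff.mp (Finset.mem_range.mp hs)
          rw [← mul_assoc, ← pow_succ']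
          congr 2
          omega
        · simp
      linarith
  intro t
  have hGint : Integrable (G t) μ := by
    apply integrable_finset_sum
    intro s _
    exact ((hint s).const_mul c).const_mul (r ^ (t - s))
  have hmono : ∫ ω, ‖m (t + 1) ω‖ ^ 2 ∂μ ≤ ∫ ω, G t ω ∂μ := by
    apply integral_mono_of_nonneg
    · filter_upwards with ω using sq_nonneg _
    · exact hGint
    · filter_upwards with ω using hpt t ω
  have hGval : ∫ ω, G t ω ∂μ = ∑ s ∈ Finset.range (t + 1),
      r ^ (t - s) * (c * ∫ ω, ‖u s ω‖ ^ 2 ∂μ) := by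
    simp only [hG_def]
    rw [integral_finset_sum]
    · apply Finset.sum_congr rfl
      intro s _
      rw [integral_const_mul, integral_const_mul]
    · intro s _
      exact ((hint s).const_mul c).const_mul (r ^ (t - s))
  have hsum : ∑ s ∈ Finset.range (t + 1), r ^ (t - s) * (c * ∫ ω, ‖u s ω‖ ^ 2 ∂μ)
      ≤ (∑ s ∈ Finset.range (t + 1), r ^ (t - s)) * (c * U ^ 2) := by
    rw [Finset.sum_mul]
    apply Finset.sum_le_sum
    intro s _
    apply mul_le_mul_of_nonneg_left _ (pow_nonneg hr0 _)
    exact mul_le_mul_of_nonneg_left (hu s) hc0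
  have hgeom : (∑ s ∈ Finset.range (t + 1), r ^ (t - s)) ≤ 2 / δ := by
    have hre : (∑ s ∈ Finset.range (t + 1), r ^ (t - s))
        = ∑ k ∈ Finset.range (t + 1), r ^ k := by
      rw [← Finset.sum_range_reflect]
      apply Finset.sum_congr rfl
      intro s hs
      congr 1
      have := Finset.mem_range.mp hs
      omega
    rw [hre, le_div_iff₀ hδ0]
    have hgm := geom_sum_mul r (t + 1)
    have hpow : 0 ≤ r ^ (t + 1) := pow_nonneg hr0 _
    have hsumnn : 0 ≤ ∑ k ∈ Finset.range (t + 1), r ^ k :=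
      Finset.sum_nonneg fun k _ => pow_nonneg hr0 k
    simp only [hr_def] at hgm ⊢
    nlinarith [hsumnn, hpow, hgm]
  have hfinal : (2 / δ) * (c * U ^ 2) ≤ 4 * (1 - δ) / δ ^ 2 * U ^ 2 := by
    have heq : (2 / δ) * (c * U ^ 2) = (2 * ((1 - δ) * (2 - δ)) * U ^ 2) / δ ^ 2 := by
      rw [hc_def]; field_simp
    have heq2 : 4 * (1 - δ) / δ ^ 2 * U ^ 2 = (4 * (1 - δ) * U ^ 2) / δ ^ 2 := by
      ring
    rw [heq, heq2]
    apply div_le_div_of_nonneg_right ?_ (by positivity)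
    nlinarith [mul_nonneg (mul_nonneg (by linarith : (0:ℝ) ≤ 1 - δ) hδ0.le) hU2]
  calc ∫ ω, ‖m (t + 1) ω‖ ^ 2 ∂μ ≤ ∫ ω, G t ω ∂μ := hmono
    _ = _ := hGval
    _ ≤ (∑ s ∈ Finset.range (t + 1), r ^ (t - s)) * (c * U ^ 2) := hsum
    _ ≤ (2 / δ) * (c * U ^ 2) := by
        apply mul_le_mul_of_nonneg_right hgeom (by positivity)
    _ ≤ _ := hfinal
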